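/- arXiv:1005.4492 — 3 statements merged into one kernel-verified Lean document; each statement's English description precedes it below -/
import Mathlib

section
/- Let D be a Steiner 2-design S(2,k,v) and G_1 its 1-block intersection graph, which is r-regular with r = k(v-k)/(k-1) and has b = v(v-1)/(k(k-1)) vertices. If the independence number α(G_1) satisfies α(G_1) > k · ⌊v(v-1)/(k^2·v - k^3 + k^2 - k)⌋, then G_1 is not silver. -/
open Finset

variable {α : Type*}

/-- A Steiner 2-design `S(2,k,v)`: the point set has `v` points, every block has
`k` points, and every pair of distinct points lies in exactly one block. -/
def IsSteiner [Fintype α] [DecidableEq α] (v k : ℕ) (B : Finset (Finset α)) : Prop :=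
  Fintype.card α = v ∧ (∀ b ∈ B, b.card = k) ∧
    ∀ x y : α, x ≠ y → (B.filter fun b => x ∈ b ∧ y ∈ b).card = 1

/-- The `i`-block intersection graph: vertices are the blocks of `B`, two blocks
adjacent iff they intersect in exactly `i` points. -/
def BIG [DecidableEq α] (i : ℕ) (B : Finset (Finset α)) :
    SimpleGraph {b : Finset α // b ∈ B} where
  Adj b₁ b₂ := b₁ ≠ b₂ ∧ ((b₁ : Finset α) ∩ (b₂ : Finset α)).card = i
  symm := ⟨fun a b ⟨h1, h2⟩ => ⟨h1.symm, by rwa [Finset.inter_comm]⟩⟩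
  loopless := ⟨fun a ⟨h, _⟩ => h rfl⟩

instance [DecidableEq α] (i : ℕ) (B : Finset (Finset α)) :
    DecidableRel (BIG (α := α) i B).Adj := fun _ _ => show Decidable (_ ∧ _) from instDecidableAnd

/-- `I` is a maximum independent set of `G`. -/
def IsMaxIndep {V : Type*} (G : SimpleGraph V) (I : Finset V) : Prop :=
  (∀ a ∈ I, ∀ b ∈ I, ¬ G.Adj a b) ∧
    ∀ J : Finset V, (∀ a ∈ J, ∀ b ∈ J, ¬ G.Adj a b) → J.card ≤ I.card

/-- A silver coloring of the `r`-regular graph `G` with respect to `I`: a proper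
`(r+1)`-coloring under which every vertex of `I` is rainbow (all `r+1` colors
appear on its closed neighborhood). -/
def SilverWith {V : Type*} (G : SimpleGraph V) (r : ℕ) (I : Finset V) : Prop :=
  ∃ c : V → Fin (r + 1), (∀ a b, G.Adj a b → c a ≠ c b) ∧
    ∀ x ∈ I, ∀ col : Fin (r + 1), ∃ y, (y = x ∨ G.Adj x y) ∧ c y = col

/-- `G` is silver: some silver coloring exists with respect to some maximum
independent set. -/
def IsSilver {V : Type*} (G : SimpleGraph V) (r : ℕ) : Prop :=
  ∃ I : Finset V, IsMaxIndep G I ∧ SilverWith G r I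

-- double counting: v*v - v = B.card * (k*k - k)
lemma steiner_count [Fintype α] [DecidableEq α] (v k : ℕ) (B : Finset (Finset α))
    (hD : IsSteiner v k B) : v * v - v = B.card * (k * k - k) := by
  obtain ⟨hv, hblk, hpair⟩ := hD
  have h1 : ∑ p ∈ (univ : Finset α).offDiag, (B.filter fun b => p.1 ∈ b ∧ p.2 ∈ b).card
      = (univ : Finset α).offDiag.card := by
    rw [Finset.card_eq_sum_ones]
    exact Finset.sum_congr rfl fun p hp => hpair p.1 p.2 (Finset.mem_offDiag.mp hp).2.2
  have h2 : ∑ p ∈ (univ : Finset α).offDiag, (B.filter fun b => p.1 ∈ b ∧ p.2 ∈ b).card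
      = ∑ b ∈ B, ((univ : Finset α).offDiag.filter fun p => p.1 ∈ b ∧ p.2 ∈ b).card := by
    simp_rw [Finset.card_filter]
    exact Finset.sum_comm
  have h3 : ∀ b ∈ B, ((univ : Finset α).offDiag.filter fun p => p.1 ∈ b ∧ p.2 ∈ b)
      = b.offDiag := by
    intro b hb
    ext p
    simp only [Finset.mem_filter, Finset.mem_offDiag, Finset.mem_univ, true_and]
    tauto
  have h4 : ∑ b ∈ B, ((univ : Finset α).offDiag.filter fun p => p.1 ∈ b ∧ p.2 ∈ b).card
      = B.card * (k * k - k) := by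
    rw [Finset.sum_congr rfl fun b hb => by rw [h3 b hb, Finset.offDiag_card, hblk b hb]]
    simp [mul_comm]
  have h5 : (univ : Finset α).offDiag.card = v * v - v := by
    rw [Finset.offDiag_card, Finset.card_univ, hv]
  omega

lemma steiner_repl [Fintype α] [DecidableEq α] (v k : ℕ) (B : Finset (Finset α))
    (hv0 : 0 < v) (hD : IsSteiner v k B) : (k - 1) ∣ (v - 1) := by
  obtain ⟨hv, hblk, hpair⟩ := hD
  have : Nonempty α := by
    rw [← Fintype.card_pos_iff, hv]; exact hv0
  obtain ⟨x⟩ := this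
  have h1 : ∑ y ∈ (univ : Finset α).erase x, (B.filter fun b => x ∈ b ∧ y ∈ b).card
      = v - 1 := by
    rw [Finset.sum_congr rfl fun y hy => hpair x y (Finset.ne_of_mem_erase hy).symm]
    simp [Finset.card_erase_of_mem (Finset.mem_univ x), hv]
  have h2 : ∑ y ∈ (univ : Finset α).erase x, (B.filter fun b => x ∈ b ∧ y ∈ b).card
      = ∑ b ∈ B, (((univ : Finset α).erase x).filter fun y => x ∈ b ∧ y ∈ b).card := by
    simp_rw [Finset.card_filter]
    exact Finset.sum_comm
  have h3 : ∀ b ∈ B, (((univ : Finset α).erase x).filter fun y => x ∈ b ∧ y ∈ b).card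
      = if x ∈ b then k - 1 else 0 := by
    intro b hb
    by_cases hxb : x ∈ b
    · rw [if_pos hxb]
      have : (((univ : Finset α).erase x).filter fun y => x ∈ b ∧ y ∈ b) = b.erase x := by
        ext y
        simp only [Finset.mem_filter, Finset.mem_erase, Finset.mem_univ, true_and]
        tauto
      rw [this, Finset.card_erase_of_mem hxb, hblk b hb]
    · rw [if_neg hxb]
      rw [Finset.card_eq_zero]
      ext y
      simp only [Finset.mem_filter]
      tauto
  rw [h2, Finset.sum_congr rfl h3] at h1
  rw [← h1]
  exact Finset.dvd_sum fun b hb => by split <;> simp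

lemma steiner_arith (k m v b : ℕ) (hk : 2 < k) (hv : v = k + (k - 1) * m)
    (hA : v * v - v = b * (k * k - k)) :
    v * (v - 1) / (k ^ 2 * v - k ^ 3 + k ^ 2 - k) = b / (k * (v - k) / (k - 1) + 1) := by
  obtain ⟨k', rfl⟩ : ∃ k', k = k' + 3 := ⟨k - 3, by omega⟩
  have hk1 : k' + 3 - 1 = k' + 2 := rfl
  rw [hk1] at hv ⊢
  have hvk : v - (k' + 3) = (k' + 2) * m := by omega
  have hr : (k' + 3) * ((k' + 2) * m) / (k' + 2) = (k' + 3) * m := by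
    rw [show (k' + 3) * ((k' + 2) * m) = (k' + 2) * ((k' + 3) * m) by ring]
    exact Nat.mul_div_cancel_left _ (by omega)
  have hv1 : 1 ≤ v := by omega
  have hvv : v * (v - 1) = v * v - v := by
    obtain ⟨w, rfl⟩ : ∃ w, v = w + 1 := ⟨v - 1, by omega⟩
    simp only [Nat.add_sub_cancel]
    have : (w + 1) * (w + 1) = (w + 1) * w + (w + 1) := by ring
    omega
  have hkk : (k' + 3) * (k' + 3) - (k' + 3) = (k' + 3) * (k' + 2) := by
    have : (k' + 3) * (k' + 3) = (k' + 3) * (k' + 2) + (k' + 3) := by ring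
    omega
  have hden : (k' + 3) ^ 2 * v - (k' + 3) ^ 3 + (k' + 3) ^ 2 - (k' + 3)
      = ((k' + 3) * (k' + 2)) * ((k' + 3) * m + 1) := by
    have e2 : (k' + 3) ^ 2 * v = (k' + 3) ^ 3 + (k' + 3) ^ 2 * ((k' + 2) * m) := by
      rw [hv]; ring
    have e3 : (k' + 3) ^ 2 = (k' + 3) * (k' + 2) + (k' + 3) := by ring
    have e4 : (k' + 3) ^ 2 * ((k' + 2) * m) + (k' + 3) * (k' + 2)
        = ((k' + 3) * (k' + 2)) * ((k' + 3) * m + 1) := by ring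
    omega
  rw [hden, hvk, hr, hvv, hA, hkk]
  rw [show b * ((k' + 3) * (k' + 2)) = ((k' + 3) * (k' + 2)) * b by ring]
  exact Nat.mul_div_mul_left _ _ (by positivity)

/-- If the independence number of the 1-block intersection graph of an
`S(2,k,v)` exceeds `k·⌊v(v-1)/(k²v - k³ + k² - k)⌋`, then the graph is not
silver. -/
theorem stmt7 [Fintype α] [DecidableEq α] (v k : ℕ) (B : Finset (Finset α))
    (hk : 2 < k) (hkv : k < v) (hD : IsSteiner v k B)
    (halpha : ∃ I : Finset {b : Finset α // b ∈ B},
      (∀ a ∈ I, ∀ b ∈ I, ¬ (BIG 1 B).Adj a b) ∧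
      I.card > k * (v * (v - 1) / (k ^ 2 * v - k ^ 3 + k ^ 2 - k))) :
    ¬ IsSilver (BIG 1 B) (k * (v - k) / (k - 1)) := by
  classical
  intro hsilver
  set r := k * (v - k) / (k - 1) with hrdef
  obtain ⟨I, ⟨hIind, hImax⟩, c, hproper, hrainbow⟩ := hsilver
  obtain ⟨J, hJind, hJcard⟩ := halpha
  have hIbig : I.card > k * (v * (v - 1) / (k ^ 2 * v - k ^ 3 + k ^ 2 - k)) :=
    lt_of_lt_of_le hJcard (hImax J hJind)
  obtain ⟨hvcard, hblk, hpair⟩ := hD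
  -- distinct blocks meet in at most one point
  have hint : ∀ b₁ b₂ : {b : Finset α // b ∈ B}, b₁ ≠ b₂ →
      ((b₁ : Finset α) ∩ (b₂ : Finset α)).card ≤ 1 := by
    intro b₁ b₂ hne
    by_contra h
    push_neg at h
    obtain ⟨x, hx, y, hy, hxy⟩ := Finset.one_lt_card.mp h
    have h1 : (b₁ : Finset α) ∈ B.filter (fun b => x ∈ b ∧ y ∈ b) :=
      Finset.mem_filter.mpr ⟨b₁.2, (Finset.mem_inter.mp hx).1, (Finset.mem_inter.mp hy).1⟩
    have h2 : (b₂ : Finset α) ∈ B.filter (fun b => x ∈ b ∧ y ∈ b) :=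
      Finset.mem_filter.mpr ⟨b₂.2, (Finset.mem_inter.mp hx).2, (Finset.mem_inter.mp hy).2⟩
    have h3 := hpair x y hxy
    have h4 : 1 < (B.filter (fun b => x ∈ b ∧ y ∈ b)).card :=
      Finset.one_lt_card.mpr ⟨_, h1, _, h2, fun h => hne (Subtype.ext h)⟩
    omega
  -- blocks of I are pairwise disjoint
  have hdisj : ∀ a ∈ I, ∀ b ∈ I, a ≠ b → ((a : Finset α) ∩ (b : Finset α)) = ∅ := by
    intro a ha b hb hne
    have h1 := hint a b hne
    have h2 : ((a : Finset α) ∩ (b : Finset α)).card ≠ 1 := fun h =>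
      hIind a ha b hb (show a ≠ b ∧ ((a : Finset α) ∩ (b : Finset α)).card = 1 from ⟨hne, h⟩)
    exact Finset.card_eq_zero.mp (by omega)
  -- per-color bound
  have hcol : ∀ col : Fin (r + 1),
      I.card ≤ k * ((univ : Finset {b : Finset α // b ∈ B}).filter (fun y => c y = col)).card := by
    intro col
    obtain ⟨g, hgspec⟩ : ∃ g : {b : Finset α // b ∈ B} → {b : Finset α // b ∈ B},
        ∀ x ∈ I, (g x = x ∨ (BIG 1 B).Adj x (g x)) ∧ c (g x) = col := by
      refine ⟨fun x => if hx : x ∈ I then Classical.choose (hrainbow x hx col) else x,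
        fun x hx => ?_⟩
      simp only [dif_pos hx]
      exact Classical.choose_spec (hrainbow x hx col)
    apply Finset.card_le_mul_card_image_of_maps_to (f := g)
    · intro x hx
      simp only [Finset.mem_filter, Finset.mem_univ, true_and]
      exact (hgspec x hx).2
    · intro y hy
      have hgy : ∀ x ∈ I.filter (fun x => g x = y), x = y ∨ (BIG 1 B).Adj x y := by
        intro x hx
        obtain ⟨hxI, hgx⟩ := Finset.mem_filter.mp hx
        have := (hgspec x hxI).1
        rw [hgx] at this
        exact this.imp (fun h => h.symm) id
      by_cases hyI : y ∈ I
      · have hsub : I.filter (fun x => g x = y) ⊆ {y} := by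
          intro x hx
          rcases hgy x hx with h | h
          · simp [h]
          · exact absurd h (hIind x (Finset.mem_filter.mp hx).1 y hyI)
        calc (I.filter (fun x => g x = y)).card ≤ 1 := by
              simpa using Finset.card_le_card hsub
          _ ≤ k := by omega
      · -- distinct blocks of I meeting y in one point
        have hky : (y : Finset α).card = k := hblk y y.2
        rw [← hky]
        have hne : Nonempty α := by
          rw [← Fintype.card_pos_iff, hvcard]; omega
        obtain ⟨a0⟩ := hne
        set pt : {b : Finset α // b ∈ B} → α :=
          fun x => if h : ((x : Finset α) ∩ (y : Finset α)).Nonempty then h.choose else a0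
          with hpt
        have hmem : ∀ x ∈ I.filter (fun x => g x = y),
            pt x ∈ (x : Finset α) ∩ (y : Finset α) := by
          intro x hx
          rcases hgy x hx with h | h
          · exact absurd (h ▸ (Finset.mem_filter.mp hx).1) hyI
          · have hcard : ((x : Finset α) ∩ (y : Finset α)).card = 1 :=
              (show x ≠ y ∧ ((x : Finset α) ∩ (y : Finset α)).card = 1 from h).2
            have hne2 : ((x : Finset α) ∩ (y : Finset α)).Nonempty :=
              Finset.card_pos.mp (by omega)
            simp only [hpt, dif_pos hne2]
            exact hne2.choose_spec
        apply Finset.card_le_card_of_injOn pt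
        · intro x hx
          exact (Finset.mem_inter.mp (hmem x hx)).2
        · intro x₁ h₁ x₂ h₂ heq
          by_contra hne12
          have h₁' : x₁ ∈ I.filter (fun x => g x = y) := Finset.mem_coe.mp h₁
          have h₂' : x₂ ∈ I.filter (fun x => g x = y) := Finset.mem_coe.mp h₂
          have d := hdisj x₁ (Finset.mem_filter.mp h₁').1 x₂
            (Finset.mem_filter.mp h₂').1 hne12
          have m1 : pt x₁ ∈ (x₁ : Finset α) := (Finset.mem_inter.mp (hmem x₁ h₁')).1
          have m2 : pt x₂ ∈ (x₂ : Finset α) := (Finset.mem_inter.mp (hmem x₂ h₂')).1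
          rw [← heq] at m2
          have : pt x₁ ∈ (x₁ : Finset α) ∩ (x₂ : Finset α) := Finset.mem_inter.mpr ⟨m1, m2⟩
          rw [d] at this
          exact absurd this (Finset.notMem_empty _)
  -- sum of color class sizes
  have hsum : ∑ col : Fin (r + 1),
      ((univ : Finset {b : Finset α // b ∈ B}).filter (fun y => c y = col)).card = B.card := by
    rw [← Fintype.card_coe B, ← Finset.card_univ]
    exact (Finset.card_eq_sum_card_fiberwise (fun x _ => Finset.mem_univ (c x))).symm
  -- minimal color class
  obtain ⟨col₀, -, hmin⟩ := Finset.exists_min_image (univ : Finset (Fin (r + 1)))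
    (fun col => ((univ : Finset {b : Finset α // b ∈ B}).filter (fun y => c y = col)).card)
    ⟨0, Finset.mem_univ 0⟩
  set m₀ := ((univ : Finset {b : Finset α // b ∈ B}).filter (fun y => c y = col₀)).card with hm₀
  have h1 : (r + 1) * m₀ ≤ B.card := by
    calc (r + 1) * m₀ = ∑ _col : Fin (r + 1), m₀ := by
          simp [Finset.sum_const, Finset.card_univ, mul_comm]
      _ ≤ ∑ col : Fin (r + 1),
            ((univ : Finset {b : Finset α // b ∈ B}).filter (fun y => c y = col)).card :=
          Finset.sum_le_sum fun i _ => hmin i (Finset.mem_univ i)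
      _ = B.card := hsum
  have h2 : m₀ ≤ B.card / (r + 1) :=
    (Nat.le_div_iff_mul_le (Nat.succ_pos r)).mpr (by rw [mul_comm] at h1; exact h1)
  -- arithmetic identification of the bound
  obtain ⟨t, ht⟩ := steiner_repl v k B (by omega) ⟨hvcard, hblk, hpair⟩
  obtain ⟨m, hv_eq⟩ : ∃ m, v = k + (k - 1) * m := by
    have ht1 : t ≠ 0 := by rintro rfl; simp at ht; omega
    obtain ⟨u, rfl⟩ : ∃ u, t = u + 1 := ⟨t - 1, by omega⟩
    have h' : (k - 1) * (u + 1) = (k - 1) * u + (k - 1) := by ring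
    exact ⟨u, by omega⟩
  have harith := steiner_arith k m v B.card hk hv_eq (steiner_count v k B ⟨hvcard, hblk, hpair⟩)
  have hfinal : I.card ≤ k * (v * (v - 1) / (k ^ 2 * v - k ^ 3 + k ^ 2 - k)) := by
    calc I.card ≤ k * m₀ := hcol col₀
      _ ≤ k * (B.card / (r + 1)) := Nat.mul_le_mul_left k h2
      _ = k * (v * (v - 1) / (k ^ 2 * v - k ^ 3 + k ^ 2 - k)) := by rw [harith, hrdef]
  omega
end

section
/- Let D be a Steiner 2-design S(2,k,v) with v > k^3 - 2k^2 + 2k, and let G_0 be its 0-block intersection graph (blocks adjacent iff disjoint). Then every maximum independent set of G_0 is of the form T(x) = {blocks containing x} for some point x, and consequently α(G_0) = (v-1)/(k-1). -/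
open Finset

variable {α : Type*}

section Aux
variable [Fintype α] [DecidableEq α] {v k : ℕ} {B : Finset (Finset α)}

lemma unique_block (hD : IsSteiner v k B) {x y : α} (hxy : x ≠ y)
    {b b' : Finset α} (hb : b ∈ B) (hb' : b' ∈ B)
    (h1 : x ∈ b) (h2 : y ∈ b) (h3 : x ∈ b') (h4 : y ∈ b') : b = b' := by
  have h := hD.2.2 x y hxy
  exact Finset.card_le_one.mp h.le b (by simp [Finset.mem_filter, hb, h1, h2])
    b' (by simp [Finset.mem_filter, hb', h3, h4])

lemma exists_block (hD : IsSteiner v k B) {x y : α} (hxy : x ≠ y) :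
    ∃ b ∈ B, x ∈ b ∧ y ∈ b := by
  have h := hD.2.2 x y hxy
  have : (B.filter fun b => x ∈ b ∧ y ∈ b).Nonempty :=
    Finset.card_pos.mp (by omega)
  obtain ⟨b, hb⟩ := this
  simp only [Finset.mem_filter] at hb
  exact ⟨b, hb.1, hb.2⟩

lemma T_card (hD : IsSteiner v k B) (x : α) :
    (B.filter fun b => x ∈ b).card * (k - 1) = v - 1 := by
  classical
  have hbiU : ((B.filter fun b => x ∈ b).biUnion fun b => b.erase x)
      = Finset.univ.erase x := by
    ext y
    simp only [Finset.mem_biUnion, Finset.mem_filter, Finset.mem_erase,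
      Finset.mem_univ, and_true]
    constructor
    · rintro ⟨b, ⟨_, _⟩, hyx, _⟩
      exact hyx
    · intro hyx
      obtain ⟨b, hbB, hxb, hyb⟩ := exists_block hD (Ne.symm hyx)
      exact ⟨b, ⟨hbB, hxb⟩, hyx, hyb⟩
  have hdisj : ∀ b ∈ B.filter (fun b => x ∈ b), ∀ b' ∈ B.filter (fun b => x ∈ b),
      b ≠ b' → Disjoint (b.erase x) (b'.erase x) := by
    intro b hb b' hb' hne
    simp only [Finset.mem_filter] at hb hb'
    rw [Finset.disjoint_left]
    intro y hy hy'
    rw [Finset.mem_erase] at hy hy'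
    exact hne (unique_block hD (Ne.symm hy.1) hb.1 hb'.1 hb.2 hy.2 hb'.2 hy'.2)
  have hcb := Finset.card_biUnion hdisj
  rw [hbiU] at hcb
  have hsum : ∑ b ∈ B.filter (fun b => x ∈ b), (b.erase x).card
      = (B.filter fun b => x ∈ b).card * (k - 1) := by
    rw [Finset.sum_congr rfl (fun b hb => ?_), Finset.sum_const, smul_eq_mul]
    simp only [Finset.mem_filter] at hb
    rw [Finset.card_erase_of_mem hb.2, hD.2.1 b hb.1]
  rw [hsum] at hcb
  rw [← hcb, Finset.card_erase_of_mem (Finset.mem_univ x), Finset.card_univ, hD.1]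

/-- blocks through `x`, as a set of vertices of the BIG. -/
lemma Tsub_card (_hD : IsSteiner v k B) (x : α) :
    (Finset.univ.filter fun b : {b : Finset α // b ∈ B} => x ∈ b.1).card
      = (B.filter fun b => x ∈ b).card := by
  classical
  refine Finset.card_bij (fun b _ => (b : Finset α)) ?_ ?_ ?_
  · intro a ha
    simp only [Finset.mem_filter, Finset.mem_univ, true_and] at ha ⊢
    exact ⟨a.2, ha⟩
  · intro a _ b _ h
    exact Subtype.ext h
  · intro b hb
    simp only [Finset.mem_filter] at hb
    exact ⟨⟨b, hb.1⟩, by simp [hb.2], rfl⟩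

omit [Fintype α] in
lemma Tsub_indep (x : α) :
    ∀ a ∈ (Finset.univ.filter fun b : {b : Finset α // b ∈ B} => x ∈ b.1),
      ∀ b ∈ (Finset.univ.filter fun b : {b : Finset α // b ∈ B} => x ∈ b.1),
        ¬ (BIG 0 B).Adj a b := by
  intro a ha b hb hadj
  simp only [Finset.mem_filter, Finset.mem_univ, true_and] at ha hb
  obtain ⟨_, h0⟩ : a ≠ b ∧ ((a : Finset α) ∩ (b : Finset α)).card = 0 := hadj
  have : x ∈ (a : Finset α) ∩ (b : Finset α) := Finset.mem_inter.mpr ⟨ha, hb⟩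
  rw [Finset.card_eq_zero.mp h0] at this
  exact absurd this (Finset.notMem_empty x)

/-- Any family of pairwise-intersecting blocks with no common point has
at most `k + (k-1)*(k-1)` members. -/
lemma no_common_point_bound (hD : IsSteiner v k B) {S : Finset (Finset α)}
    (hSB : S ⊆ B)
    (hmeet : ∀ b ∈ S, ∀ b' ∈ S, b ≠ b' → (b ∩ b').Nonempty)
    (h2 : 1 < S.card)
    (hnc : ∀ x : α, ∃ b ∈ S, x ∉ b) :
    S.card ≤ k + (k - 1) * (k - 1) := by
  classical
  obtain ⟨b1, hb1, b2, hb2, hne⟩ := Finset.one_lt_card.mp h2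
  have hintle : ∀ b ∈ B, ∀ b' ∈ B, b ≠ b' → (b ∩ b').card ≤ 1 := by
    intro b hb b' hb' hbb
    by_contra hc
    have hgt : 1 < (b ∩ b').card := by omega
    obtain ⟨u, hu, w, hw, huw⟩ := Finset.one_lt_card.mp hgt
    rw [Finset.mem_inter] at hu hw
    exact hbb (unique_block hD huw hb hb' hu.1 hw.1 hu.2 hw.2)
  have h12 : (b1 ∩ b2).card = 1 := le_antisymm
    (hintle b1 (hSB hb1) b2 (hSB hb2) hne)
    (Finset.card_pos.mpr (hmeet b1 hb1 b2 hb2 hne))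
  obtain ⟨p, hp⟩ := Finset.card_eq_one.mp h12
  have hpb1 : p ∈ b1 := (Finset.mem_inter.mp (hp ▸ Finset.mem_singleton_self p)).1
  have hpb2 : p ∈ b2 := (Finset.mem_inter.mp (hp ▸ Finset.mem_singleton_self p)).2
  obtain ⟨b3, hb3, hpb3⟩ := hnc p
  -- the choice function
  set f : Finset α → Finset α → α :=
    fun b c => if h : (b ∩ c).Nonempty then h.choose else p with hf
  have hfmem : ∀ b c, (b ∩ c).Nonempty → f b c ∈ b ∩ c := by
    intro b c h
    rw [hf]
    simp only [dif_pos h]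
    exact h.choose_spec
  have hcard : S.card = (S.filter fun b => p ∈ b).card
      + (S.filter fun b => p ∉ b).card :=
    (Finset.card_filter_add_card_filter_not (fun b => p ∈ b)).symm
  -- blocks through p inject into b3
  have hSp : (S.filter fun b => p ∈ b).card ≤ k := by
    have : (S.filter fun b => p ∈ b).card ≤ b3.card := by
      apply Finset.card_le_card_of_injOn (fun b => f b b3)
      · intro b hb
        simp only [Finset.coe_filter, Set.mem_setOf_eq, Finset.mem_coe, Finset.mem_filter] at hb ⊢
        have hb3ne : b ≠ b3 := fun h => hpb3 (h ▸ hb.2)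
        have := hfmem b b3 (hmeet b hb.1 b3 hb3 hb3ne)
        exact (Finset.mem_inter.mp this).2
      · intro b hb b' hb' hfe
        have hfe' : f b b3 = f b' b3 := hfe
        simp only [Finset.coe_filter, Set.mem_setOf_eq] at hb hb'
        have hbne : b ≠ b3 := fun h => hpb3 (h ▸ hb.2)
        have hbne' : b' ≠ b3 := fun h => hpb3 (h ▸ hb'.2)
        have h1 := hfmem b b3 (hmeet b hb.1 b3 hb3 hbne)
        have h2' := hfmem b' b3 (hmeet b' hb'.1 b3 hb3 hbne')
        rw [Finset.mem_inter] at h1 h2'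
        have hzp : f b b3 ≠ p := fun h => hpb3 (h ▸ h1.2)
        refine unique_block hD (Ne.symm hzp) (hSB hb.1) (hSB hb'.1)
          hb.2 h1.1 hb'.2 ?_
        rw [hfe']; exact h2'.1
    rwa [hD.2.1 b3 (hSB hb3)] at this
  -- blocks missing p inject into (b1.erase p) ×ˢ (b2.erase p)
  have hSq : (S.filter fun b => p ∉ b).card ≤ (k - 1) * (k - 1) := by
    have key : ∀ b, b ∈ S → p ∉ b →
        f b b1 ∈ b ∩ b1 ∧ f b b2 ∈ b ∩ b2 ∧ f b b1 ≠ f b b2 := by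
      intro b hbS hpb
      have hbne1 : b ≠ b1 := fun h => hpb (h ▸ hpb1)
      have hbne2 : b ≠ b2 := fun h => hpb (h ▸ hpb2)
      have m1 := hfmem b b1 (hmeet b hbS b1 hb1 hbne1)
      have m2 := hfmem b b2 (hmeet b hbS b2 hb2 hbne2)
      refine ⟨m1, m2, fun heq => ?_⟩
      rw [Finset.mem_inter] at m1 m2
      have : f b b1 ∈ b1 ∩ b2 := Finset.mem_inter.mpr ⟨m1.2, heq ▸ m2.2⟩
      rw [hp, Finset.mem_singleton] at this
      exact hpb (this ▸ m1.1)
    have : (S.filter fun b => p ∉ b).card ≤ ((b1.erase p) ×ˢ (b2.erase p)).card := by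
      apply Finset.card_le_card_of_injOn (fun b => (f b b1, f b b2))
      · intro b hb
        simp only [Finset.coe_filter, Set.mem_setOf_eq, Finset.mem_coe, Finset.mem_filter] at hb ⊢
        obtain ⟨m1, m2, _⟩ := key b hb.1 hb.2
        rw [Finset.mem_inter] at m1 m2
        rw [Finset.mem_product, Finset.mem_erase, Finset.mem_erase]
        exact ⟨⟨fun h => hb.2 (h ▸ m1.1), m1.2⟩, ⟨fun h => hb.2 (h ▸ m2.1), m2.2⟩⟩
      · intro b hb b' hb' hfe
        simp only [Finset.coe_filter, Set.mem_setOf_eq] at hb hb'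
        obtain ⟨m1, m2, hxy⟩ := key b hb.1 hb.2
        obtain ⟨m1', m2', _⟩ := key b' hb'.1 hb'.2
        have hfe' : (f b b1, f b b2) = (f b' b1, f b' b2) := hfe
        have e1 : f b b1 = f b' b1 := congrArg Prod.fst hfe'
        have e2 : f b b2 = f b' b2 := congrArg Prod.snd hfe'
        rw [Finset.mem_inter] at m1 m2 m1' m2'
        exact unique_block hD hxy (hSB hb.1) (hSB hb'.1) m1.1 m2.1
          (e1 ▸ m1'.1) (e2 ▸ m2'.1)
    rwa [Finset.card_product, Finset.card_erase_of_mem hpb1,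
      Finset.card_erase_of_mem hpb2, hD.2.1 b1 (hSB hb1), hD.2.1 b2 (hSB hb2)] at this
  omega

lemma key_lemma (hD : IsSteiner v k B) (hk : 2 < k) (hkv : k < v)
    (hv : v > k ^ 3 - 2 * k ^ 2 + 2 * k)
    (I : Finset {b : Finset α // b ∈ B}) (hI : IsMaxIndep (BIG 0 B) I) :
    ∃ x : α, I = Finset.univ.filter (fun b : {b : Finset α // b ∈ B} => x ∈ b.1)
      ∧ I.card * (k - 1) = v - 1 := by
  classical
  obtain ⟨m, rfl⟩ : ∃ m, k = m + 3 := ⟨k - 3, by omega⟩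
  have hαpos : 0 < Fintype.card α := by rw [hD.1]; omega
  have ⟨x0⟩ : Nonempty α := Fintype.card_pos_iff.mp hαpos
  have hm1 : m + 3 - 1 = m + 2 := by omega
  -- lower bound on I.card
  have hmax : ∀ x : α,
      (Finset.univ.filter fun b : {b : Finset α // b ∈ B} => x ∈ b.1).card ≤ I.card :=
    fun x => hI.2 _ (Tsub_indep x)
  have hT0 : (B.filter fun b => x0 ∈ b).card * (m + 2) = v - 1 := by
    have := T_card hD x0
    rwa [hm1] at this
  have hvlb : (m ^ 2 + 5 * m + 7) * (m + 2) < v - 1 := by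
    have hcube : (m + 3) ^ 3 - 2 * (m + 3) ^ 2 + 2 * (m + 3)
        = m ^ 3 + 7 * m ^ 2 + 17 * m + 15 := by
      have h1 : (m + 3) ^ 3 = 2 * (m + 3) ^ 2 + (m ^ 3 + 7 * m ^ 2 + 15 * m + 9) := by
        ring
      omega
    have h2 : (m ^ 2 + 5 * m + 7) * (m + 2) = m ^ 3 + 7 * m ^ 2 + 17 * m + 14 := by
      ring
    omega
  have hT0big : m ^ 2 + 5 * m + 7 < (B.filter fun b => x0 ∈ b).card := by
    refine lt_of_mul_lt_mul_right ?_ (Nat.zero_le (m + 2))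
    rw [hT0]; exact hvlb
  have hIcard : m ^ 2 + 5 * m + 7 < I.card := by
    have h := hmax x0
    rw [Tsub_card hD x0] at h
    exact lt_of_lt_of_le hT0big h
  -- the image of I in Finset (Finset α)
  set S : Finset (Finset α) := I.image Subtype.val with hS
  have hScard : S.card = I.card :=
    Finset.card_image_of_injective I Subtype.val_injective
  have hSB : S ⊆ B := by
    intro b hb
    rw [hS, Finset.mem_image] at hb
    obtain ⟨a, _, rfl⟩ := hb
    exact a.2
  have hmeet : ∀ b ∈ S, ∀ b' ∈ S, b ≠ b' → (b ∩ b').Nonempty := by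
    intro b hb b' hb' hne
    rw [hS, Finset.mem_image] at hb hb'
    obtain ⟨a, ha, rfl⟩ := hb
    obtain ⟨a', ha', rfl⟩ := hb'
    have hnadj := hI.1 a ha a' ha'
    rw [Finset.nonempty_iff_ne_empty]
    intro hemp
    exact hnadj (show a ≠ a' ∧ ((a : Finset α) ∩ (a' : Finset α)).card = 0 from ⟨fun h => hne (congrArg Subtype.val h),
      by rw [hemp]; exact Finset.card_empty⟩)
  -- common point exists
  have hcommon : ∃ x : α, ∀ b ∈ I, x ∈ b.1 := by
    by_contra hnc
    push_neg at hnc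
    have hnc' : ∀ x : α, ∃ b ∈ S, x ∉ b := by
      intro x
      obtain ⟨b, hb, hxb⟩ := hnc x
      exact ⟨b.1, Finset.mem_image_of_mem _ hb, hxb⟩
    have hbound := no_common_point_bound hD hSB hmeet (by omega) hnc'
    rw [hm1] at hbound
    have hkk : (m + 2) * (m + 2) = m ^ 2 + 4 * m + 4 := by ring
    omega
  obtain ⟨x, hx⟩ := hcommon
  have hsub : I ⊆ Finset.univ.filter fun b : {b : Finset α // b ∈ B} => x ∈ b.1 := by
    intro b hb
    simp only [Finset.mem_filter, Finset.mem_univ, true_and]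
    exact hx b hb
  have heq : I = Finset.univ.filter fun b : {b : Finset α // b ∈ B} => x ∈ b.1 :=
    Finset.eq_of_subset_of_card_le hsub (hmax x)
  refine ⟨x, heq, ?_⟩
  rw [heq, Tsub_card hD x, T_card hD x]


end Aux

/-- For `v > k³ - 2k² + 2k`, every maximum independent set of the 0-block
intersection graph of an `S(2,k,v)` is `T(x)`, the set of blocks through some
point `x`; consequently the independence number is `(v-1)/(k-1)`. -/
theorem stmt8 [Fintype α] [DecidableEq α] (v k : ℕ) (B : Finset (Finset α))
    (hk : 2 < k) (hkv : k < v) (hD : IsSteiner v k B)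
    (hv : v > k ^ 3 - 2 * k ^ 2 + 2 * k) :
    (∀ I : Finset {b : Finset α // b ∈ B}, IsMaxIndep (BIG 0 B) I →
      ∃ x : α, I = Finset.univ.filter fun b : {b : Finset α // b ∈ B} => x ∈ b.1) ∧
    ∀ I : Finset {b : Finset α // b ∈ B}, IsMaxIndep (BIG 0 B) I →
      I.card = (v - 1) / (k - 1) := by
  have key := fun I hI => key_lemma hD hk hkv hv I hI
  constructor
  · intro I hI
    obtain ⟨x, hx, _⟩ := key I hI
    exact ⟨x, hx⟩
  · intro I hI
    obtain ⟨x, _, hc⟩ := key I hI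
    have hk1 : 0 < k - 1 := by omega
    exact (Nat.div_eq_of_eq_mul_left hk1 hc.symm).symm
end

section
/- Let D be a Steiner 2-design S(2,k,v) and let I be an independent set of the 0-block intersection graph G_0 (i.e., a set of pairwise intersecting blocks) that is not contained in T(x) for any point x. Then |I| ≤ k + (k-1)^2. -/
open Finset

variable {α : Type*}

/-- If `I` is a family of pairwise intersecting blocks of an `S(2,k,v)` (an
independent set of the 0-block intersection graph) having no common point, then
`|I| ≤ k + (k-1)²`. -/
theorem stmt9 [Fintype α] [DecidableEq α] (v k : ℕ) (B : Finset (Finset α))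
    (hk : 2 < k) (hkv : k < v) (hD : IsSteiner v k B)
    (I : Finset (Finset α)) (hIB : I ⊆ B)
    (hint : ∀ b₁ ∈ I, ∀ b₂ ∈ I, b₁ ≠ b₂ → (b₁ ∩ b₂).Nonempty)
    (hnoT : ¬ ∃ x : α, ∀ b ∈ I, x ∈ b) :
    I.card ≤ k + (k - 1) ^ 2 := by
  classical
  obtain ⟨hv, hcard, hpair⟩ := hD
  have hα : Nonempty α := by
    rw [← Fintype.card_pos_iff, hv]; omega
  -- any two distinct blocks meet in at most one point
  have hA : ∀ b₁ ∈ B, ∀ b₂ ∈ B, b₁ ≠ b₂ → (b₁ ∩ b₂).card ≤ 1 := by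
    intro b₁ h₁ b₂ h₂ hne
    by_contra h
    push_neg at h
    obtain ⟨x, hx, y, hy, hxy⟩ := Finset.one_lt_card.mp h
    simp only [Finset.mem_inter] at hx hy
    have h2 : 1 < (B.filter fun b => x ∈ b ∧ y ∈ b).card :=
      Finset.one_lt_card.mpr ⟨b₁, by simp [Finset.mem_filter, h₁, hx.1, hy.1],
        b₂, by simp [Finset.mem_filter, h₂, hx.2, hy.2], hne⟩
    have := hpair x y hxy
    omega
  -- distinct blocks in I meet in exactly one point
  have hE : ∀ b₁ ∈ I, ∀ b₂ ∈ I, b₁ ≠ b₂ → (b₁ ∩ b₂).card = 1 := by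
    intro b₁ h₁ b₂ h₂ hne
    have h1 := hA b₁ (hIB h₁) b₂ (hIB h₂) hne
    have h2 := Finset.card_pos.mpr (hint b₁ h₁ b₂ h₂ hne)
    omega
  -- at most k blocks of I through a point missing some block of I
  have hB : ∀ y : α, ∀ b ∈ I, y ∉ b → (I.filter fun c => y ∈ c).card ≤ k := by
    intro y b hbI hyb
    have hbk : b.card = k := hcard b (hIB hbI)
    set f : Finset α → α := fun c =>
      if h : (c ∩ b).Nonempty then h.choose else Classical.arbitrary α with hf
    have hfmem : ∀ c ∈ I.filter fun c => y ∈ c, f c ∈ c ∩ b := by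
      intro c hc
      rw [Finset.mem_filter] at hc
      have hcb : c ≠ b := fun h => hyb (h ▸ hc.2)
      have hne : (c ∩ b).Nonempty := hint c hc.1 b hbI hcb
      simp only [hf, dif_pos hne]
      exact hne.choose_spec
    rw [← hbk]
    apply Finset.card_le_card_of_injOn f
    · intro c hc
      exact (Finset.mem_inter.mp (hfmem c hc)).2
    · intro c₁ hc₁ c₂ hc₂ hfeq
      by_contra hne
      have h1 := hfmem c₁ hc₁
      have h2 := hfmem c₂ hc₂
      rw [Finset.mem_coe, Finset.mem_filter] at hc₁ hc₂
      have hy1 : f c₁ ≠ y := fun h =>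
        hyb (h ▸ (Finset.mem_inter.mp h1).2)
      have h2' : 1 < (c₁ ∩ c₂).card :=
        Finset.one_lt_card.mpr ⟨f c₁, Finset.mem_inter.mpr
            ⟨(Finset.mem_inter.mp h1).1, hfeq ▸ (Finset.mem_inter.mp h2).1⟩,
          y, Finset.mem_inter.mpr ⟨hc₁.2, hc₂.2⟩, hy1⟩
      have := hE c₁ hc₁.1 c₂ hc₂.1 hne
      omega
  push_neg at hnoT
  rcases I.eq_empty_or_nonempty with hI | ⟨b₀, hb₀⟩
  · simp [hI]
  have hb₀k : b₀.card = k := hcard b₀ (hIB hb₀)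
  set s := I.erase b₀ with hs
  set g : Finset α → α := fun c =>
    if h : (c ∩ b₀).Nonempty then h.choose else Classical.arbitrary α with hg
  have hgmem : ∀ c ∈ s, g c ∈ c ∩ b₀ := by
    intro c hc
    rw [hs, Finset.mem_erase] at hc
    have hne : (c ∩ b₀).Nonempty := hint c hc.2 b₀ hb₀ hc.1
    simp only [hg, dif_pos hne]
    exact hne.choose_spec
  have key : s.card ≤ (k - 1) * b₀.card := by
    apply Finset.card_le_mul_card_image_of_maps_to
      (fun c hc => (Finset.mem_inter.mp (hgmem c hc)).2)
    intro a ha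
    -- fiber over a
    obtain ⟨b', hb'I, hab'⟩ := hnoT a
    have hfilt := hB a b' hb'I hab'
    have hsub : (s.filter fun c => g c = a) ⊆ (I.filter fun c => a ∈ c).erase b₀ := by
      intro c hc
      rw [Finset.mem_filter] at hc
      have hcs := hc.1
      rw [hs, Finset.mem_erase] at hcs
      have := hgmem c hc.1
      rw [hc.2, Finset.mem_inter] at this
      exact Finset.mem_erase.mpr ⟨hcs.1, Finset.mem_filter.mpr ⟨hcs.2, this.1⟩⟩
    calc (s.filter fun c => g c = a).card
        ≤ ((I.filter fun c => a ∈ c).erase b₀).card := Finset.card_le_card hsub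
      _ ≤ (I.filter fun c => a ∈ c).card - 1 := by
          rw [Finset.card_erase_of_mem (Finset.mem_filter.mpr ⟨hb₀, ha⟩)]
      _ ≤ k - 1 := by omega
  have hscard : s.card = I.card - 1 := Finset.card_erase_of_mem hb₀
  have hIpos : 0 < I.card := Finset.card_pos.mpr ⟨b₀, hb₀⟩
  rw [hb₀k] at key
  have hexp : k + (k - 1) ^ 2 = (k - 1) * k + 1 := by
    obtain ⟨m, rfl⟩ : ∃ m, k = m + 1 := ⟨k - 1, by omega⟩
    simp [pow_two]
    ring
  omega
end
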